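/- Let Ω be a nonempty open subset of ℝ^{n+1} (n ≥ 1) with nonempty topological boundary ∂Ω and with finite Lebesgue measure, and let u(y) = dist(y, ∂Ω). Then for (Lebesgue) almost every s > 0 one has ℋⁿ(Γ_s^+) = ℋⁿ(∂Ω_s), i.e. ℋⁿ(∂Ω_s \ Γ_s^+) = 0, where ∂Ω_s = {y ∈ Ω : u(y) = s} and ℋⁿ is the n-dimensional Hausdorff measure. -/

import Mathlib

open RealInnerProductSpace Metric Set MeasureTheory


open ENNReal NNReal

variable {E : Type*} [NormedAddCommGroup E] [NormedSpace ℝ E]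

set_option maxHeartbeats 1000000 in
lemma key_ineq {E : Type*} [NormedAddCommGroup E] [InnerProductSpace ℝ E]
    (x₁ x₂ y₁ y₂ : E) {s t : ℝ} (hs : 0 ≤ s) (hst : s ≤ t)
    (h₁ : ‖y₁ - x₁‖ ≤ ‖y₁ - x₂‖) (h₂ : ‖y₂ - x₂‖ ≤ ‖y₂ - x₁‖) :
    s * ‖y₁ - y₂‖ ≤ t * ‖(x₁ + (s / t) • (y₁ - x₁)) - (x₂ + (s / t) • (y₂ - x₂))‖ := by
  rcases eq_or_lt_of_le (hs.trans hst) with ht | ht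
  · have hs0 : s = 0 := le_antisymm (hst.trans ht.symm.le) hs
    simp [hs0, ← ht]
  set a := x₁ - x₂ with ha
  set b₁ := y₁ - x₁ with hb₁
  set b₂ := y₂ - x₂ with hb₂
  have e₁ : y₁ - x₂ = b₁ + a := by rw [hb₁, ha]; abel
  have e₂ : y₂ - x₁ = b₂ - a := by rw [hb₂, ha]; abel
  have c₁ : 0 ≤ 2 * ⟪b₁, a⟫ + ‖a‖ ^ 2 := by
    have h₁' : ‖b₁‖ ^ 2 ≤ ‖b₁ + a‖ ^ 2 := by
      rw [e₁] at h₁; exact pow_le_pow_left₀ (norm_nonneg _) h₁ 2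
    nlinarith [norm_add_sq_real b₁ a]
  have c₂ : 0 ≤ -(2 * ⟪b₂, a⟫) + ‖a‖ ^ 2 := by
    have h₂' : ‖b₂‖ ^ 2 ≤ ‖b₂ - a‖ ^ 2 := by
      rw [e₂] at h₂; exact pow_le_pow_left₀ (norm_nonneg _) h₂ 2
    nlinarith [norm_sub_sq_real b₂ a]
  set q := b₁ - b₂ with hq
  have ey : y₁ - y₂ = a + q := by rw [hq, ha, hb₁, hb₂]; abel
  have ew : (x₁ + (s / t) • (y₁ - x₁)) - (x₂ + (s / t) • (y₂ - x₂)) = a + (s / t) • q := by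
    simp only [ha, hb₁, hb₂, hq]; module
  have hts : t * (s / t) = s := by field_simp
  have htw : t • (a + (s / t) • q) = t • a + s • q := by
    rw [smul_add, smul_smul, hts]
  have hrhs : t * ‖(x₁ + (s / t) • (y₁ - x₁)) - (x₂ + (s / t) • (y₂ - x₂))‖
      = ‖t • a + s • q‖ := by
    rw [ew, ← htw, norm_smul, Real.norm_eq_abs, abs_of_pos ht]
  rw [hrhs, ey]
  have expand1 : ‖t • a + s • q‖ ^ 2
      = t ^ 2 * ‖a‖ ^ 2 + 2 * (t * s * ⟪a, q⟫) + s ^ 2 * ‖q‖ ^ 2 := by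
    rw [norm_add_sq_real, norm_smul, norm_smul, real_inner_smul_left, real_inner_smul_right]
    simp only [Real.norm_eq_abs, abs_of_pos ht, abs_of_nonneg hs]
    ring
  have expand2 : ‖a + q‖ ^ 2 = ‖a‖ ^ 2 + 2 * ⟪a, q⟫ + ‖q‖ ^ 2 := norm_add_sq_real a q
  have hiq : ⟪a, q⟫ = ⟪b₁, a⟫ - ⟪b₂, a⟫ := by
    rw [hq, inner_sub_right, real_inner_comm a b₁, real_inner_comm a b₂]
  have key2 : (s * ‖a + q‖) ^ 2 ≤ ‖t • a + s • q‖ ^ 2 := by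
    rw [mul_pow, expand1, expand2]
    nlinarith [mul_nonneg (mul_nonneg (sub_nonneg.2 hst) hs)
        (by nlinarith : (0:ℝ) ≤ 2 * ⟪a, q⟫ + 2 * ‖a‖ ^ 2),
      mul_nonneg (mul_nonneg (sub_nonneg.2 hst) (sub_nonneg.2 hst)) (sq_nonneg ‖a‖)]
  have hL : 0 ≤ s * ‖a + q‖ := mul_nonneg hs (norm_nonneg _)
  nlinarith [norm_nonneg (t • a + s • q), key2]


variable {E : Type*} [NormedAddCommGroup E] [NormedSpace ℝ E]

lemma seg_mem_of_infDist_pos {Ω : Set E} (hΩopen : IsOpen Ω) {z w : E} (hz : z ∈ Ω)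
    (h : ∀ p ∈ segment ℝ z w, 0 < Metric.infDist p (frontier Ω)) : w ∈ Ω := by
  have hseg : segment ℝ z w ⊆ Ω ∪ (closure Ω)ᶜ := by
    intro p hp
    by_cases hpc : p ∈ closure Ω
    · left
      have hpf : p ∉ frontier Ω := by
        intro hpf
        exact absurd (Metric.infDist_zero_of_mem hpf) (ne_of_gt (h p hp))
      have : closure Ω = Ω ∪ frontier Ω := by
        conv_lhs => rw [closure_eq_interior_union_frontier, hΩopen.interior_eq]
      rcases (this ▸ hpc) with h' | h'
      · exact h'
      · exact absurd h' hpf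
    · exact Or.inr hpc
  have hdisj : Disjoint Ω (closure Ω)ᶜ :=
    Set.disjoint_compl_right_iff_subset.mpr subset_closure
  rcases (convex_segment z w).isPreconnected.subset_or_subset hΩopen
      (isClosed_closure).isOpen_compl hdisj hseg with h' | h'
  · exact h' (right_mem_segment ℝ z w)
  · exact absurd (h' (left_mem_segment ℝ z w)) (by simp [subset_closure hz])

lemma dist_le_of_mem_segment {z w p : E} (hp : p ∈ segment ℝ z w) : dist z p ≤ dist z w := by
  have : p ∈ closedBall z (dist w z) :=
    (convex_closedBall z (dist w z)).segment_subset
      (mem_closedBall_self dist_nonneg) (mem_closedBall.2 le_rfl) hp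
  rw [dist_comm z p, dist_comm z w]
  exact mem_closedBall.1 this

/-- walking along a minimal segment -/
lemma interp_point {Ω : Set E} (hΩopen : IsOpen Ω) {x z : E} {t r : ℝ}
    (hx : x ∈ frontier Ω) (hz : z ∈ Ω) (hzt : Metric.infDist z (frontier Ω) = t)
    (hxz : ‖x - z‖ = t) (hr : 0 < r) (hrt : r ≤ t) :
    Metric.infDist (x + (r / t) • (z - x)) (frontier Ω) = r ∧
      x + (r / t) • (z - x) ∈ Ω ∧ ‖(x + (r / t) • (z - x)) - x‖ = r ∧
      ‖z - (x + (r / t) • (z - x))‖ = t - r := by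
  have ht : 0 < t := hr.trans_le hrt
  set p := x + (r / t) • (z - x) with hp
  have hpx : ‖p - x‖ = r := by
    rw [hp]
    have : x + (r / t) • (z - x) - x = (r / t) • (z - x) := by abel
    rw [this, norm_smul, Real.norm_eq_abs, abs_of_pos (div_pos hr ht), norm_sub_rev, hxz]
    field_simp
  have hzp : ‖z - p‖ = t - r := by
    rw [hp]
    have : z - (x + (r / t) • (z - x)) = (1 - r / t) • (z - x) := by module
    rw [this, norm_smul, Real.norm_eq_abs, abs_of_nonneg (by
      rw [sub_nonneg]; exact div_le_one_of_le₀ hrt ht.le), norm_sub_rev, hxz]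
    field_simp
  have hle : Metric.infDist p (frontier Ω) ≤ r := by
    calc Metric.infDist p (frontier Ω) ≤ dist p x := Metric.infDist_le_dist_of_mem hx
    _ = r := by rw [dist_eq_norm, hpx]
  have hge' : ∀ q, dist z q ≤ t - r → r ≤ Metric.infDist q (frontier Ω) := by
    intro q hq
    have := Metric.infDist_le_infDist_add_dist (x := z) (y := q) (s := frontier Ω)
    rw [hzt] at this
    linarith
  have hinf : Metric.infDist p (frontier Ω) = r :=
    le_antisymm hle (hge' p (by rw [dist_eq_norm]; simp [hzp]))
  have hmem : p ∈ Ω := by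
    refine seg_mem_of_infDist_pos hΩopen hz (fun q hq => ?_)
    have hdq : dist z q ≤ t - r := by
      calc dist z q ≤ dist z p := dist_le_of_mem_segment hq
      _ = t - r := by rw [dist_eq_norm, hzp]
    exact hr.trans_le (hge' q hdq)
  exact ⟨hinf, hmem, hpx, hzp⟩

def gam (Ω : Set E) (s t : ℝ) : Set E :=
  {y | ∃ x z, x ∈ frontier Ω ∧ z ∈ Ω ∧ Metric.infDist z (frontier Ω) = t ∧ ‖x - z‖ = t ∧
    y = x + (s / t) • (z - x)}

lemma gam_subset_level {Ω : Set E} (hΩopen : IsOpen Ω) {s t : ℝ} (hs : 0 < s) (hst : s ≤ t) :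
    gam Ω s t ⊆ {y | y ∈ Ω ∧ Metric.infDist y (frontier Ω) = s} := by
  rintro y ⟨x, z, hx, hz, hzt, hxz, rfl⟩
  obtain ⟨h1, h2, -, -⟩ := interp_point hΩopen hx hz hzt hxz hs hst
  exact ⟨h2, h1⟩

lemma gam_mono {Ω : Set E} (hΩopen : IsOpen Ω) {s t t' : ℝ} (hs : 0 < s) (hst : s ≤ t')
    (ht' : 0 < t') (htt : t' ≤ t) : gam Ω s t ⊆ gam Ω s t' := by
  rintro y ⟨x, z, hx, hz, hzt, hxz, rfl⟩
  obtain ⟨h1, h2, h3, -⟩ := interp_point hΩopen hx hz hzt hxz ht' htt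
  refine ⟨x, x + (t' / t) • (z - x), hx, h2, h1, by rw [norm_sub_rev]; simpa using h3, ?_⟩
  have ht : 0 < t := ht'.trans_le htt
  have : x + (t' / t) • (z - x) - x = (t' / t) • (z - x) := by abel
  rw [this, smul_smul]
  congr 2
  field_simp

lemma gam_measurableSet {n : ℕ} {Ω : Set (EuclideanSpace ℝ (Fin (n + 1)))} (hΩopen : IsOpen Ω)
    {s t : ℝ} (ht : 0 < t) : MeasurableSet (gam Ω s t) := by
  set W : Set (EuclideanSpace ℝ (Fin (n + 1)) × EuclideanSpace ℝ (Fin (n + 1))) := {p | p.1 ∈ frontier Ω ∧ p.2 ∈ closure Ω ∧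
    Metric.infDist p.2 (frontier Ω) = t ∧ ‖p.1 - p.2‖ = t} with hW
  have hWclosed : IsClosed W := by
    refine IsClosed.inter (isClosed_frontier.preimage continuous_fst) ?_
    refine IsClosed.inter (isClosed_closure.preimage continuous_snd) ?_
    refine IsClosed.inter ?_ ?_
    · exact isClosed_eq ((Metric.continuous_infDist_pt (frontier Ω)).comp continuous_snd)
        continuous_const
    · exact isClosed_eq ((continuous_fst.sub continuous_snd).norm) continuous_const
  have himg : gam Ω s t = (fun p : EuclideanSpace ℝ (Fin (n + 1)) × EuclideanSpace ℝ (Fin (n + 1)) => p.1 + (s / t) • (p.2 - p.1)) '' W := by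
    ext y
    constructor
    · rintro ⟨x, z, hx, hz, hzt, hxz, rfl⟩
      exact ⟨(x, z), ⟨hx, subset_closure hz, hzt, hxz⟩, rfl⟩
    · rintro ⟨⟨x, z⟩, ⟨hx, hz, hzt, hxz⟩, rfl⟩
      refine ⟨x, z, hx, ?_, hzt, hxz, rfl⟩
      have hznf : z ∉ frontier Ω := fun hzf => by
        rw [Metric.infDist_zero_of_mem hzf] at hzt; exact ht.ne hzt
      have : closure Ω = Ω ∪ frontier Ω := by
        conv_lhs => rw [closure_eq_interior_union_frontier, hΩopen.interior_eq]
      rcases (this ▸ hz) with h' | h'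
      · exact h'
      · exact absurd h' hznf
  have hcont : Continuous (fun p : EuclideanSpace ℝ (Fin (n + 1)) × EuclideanSpace ℝ (Fin (n + 1)) => p.1 + (s / t) • (p.2 - p.1)) :=
    by fun_prop
  have hcover : gam Ω s t = ⋃ k : ℕ,
      (fun p : EuclideanSpace ℝ (Fin (n + 1)) × EuclideanSpace ℝ (Fin (n + 1)) => p.1 + (s / t) • (p.2 - p.1)) '' (W ∩ closedBall 0 k) := by
    rw [himg]
    ext y
    simp only [mem_iUnion, Set.mem_image]
    constructor
    · rintro ⟨p, hp, rfl⟩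
      obtain ⟨k, hk⟩ := exists_nat_ge ‖p‖
      exact ⟨k, p, ⟨hp, by simpa [mem_closedBall, dist_zero_right] using hk⟩, rfl⟩
    · rintro ⟨k, p, ⟨hp, -⟩, rfl⟩
      exact ⟨p, hp, rfl⟩
  rw [hcover]
  refine MeasurableSet.iUnion (fun k => ?_)
  have hcomp : IsCompact (W ∩ closedBall 0 k) :=
    (isCompact_closedBall _ _).inter_left hWclosed
  exact (hcomp.image hcont).measurableSet

lemma level_le_gam {n : ℕ} {Ω : Set (EuclideanSpace ℝ (Fin (n + 1)))}
    (foot : EuclideanSpace ℝ (Fin (n + 1)) → EuclideanSpace ℝ (Fin (n + 1)))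
    (hfm : ∀ y, foot y ∈ frontier Ω)
    (hfd : ∀ y, Metric.infDist y (frontier Ω) = dist y (foot y))
    {s t : ℝ} (hs : 0 < s) (hst : s ≤ t) :
    μH[(n : ℝ)] {y | y ∈ Ω ∧ Metric.infDist y (frontier Ω) = t}
      ≤ ENNReal.ofReal ((t / s) ^ n) * μH[(n : ℝ)] (gam Ω s t) := by
  classical
  set L := {y | y ∈ Ω ∧ Metric.infDist y (frontier Ω) = t} with hL
  set h : EuclideanSpace ℝ (Fin (n + 1)) → EuclideanSpace ℝ (Fin (n + 1)) :=
    fun y => foot y + (s / t) • (y - foot y) with hh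
  have himg : ∀ y ∈ L, h y ∈ gam Ω s t := by
    rintro y ⟨hy, hyt⟩
    exact ⟨foot y, y, hfm y, hy, hyt, by
      rw [← dist_eq_norm, dist_comm, ← hfd y, hyt], rfl⟩
  have hanti : ∀ y₁ ∈ L, ∀ y₂ ∈ L, s * ‖y₁ - y₂‖ ≤ t * ‖h y₁ - h y₂‖ := by
    intro y₁ h₁ y₂ h₂
    refine key_ineq (foot y₁) (foot y₂) y₁ y₂ hs.le hst ?_ ?_
    · rw [← dist_eq_norm, ← hfd y₁, ← dist_eq_norm]
      exact Metric.infDist_le_dist_of_mem (hfm y₂)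
    · rw [← dist_eq_norm, ← hfd y₂, ← dist_eq_norm]
      exact Metric.infDist_le_dist_of_mem (hfm y₁)
  set g := Function.invFunOn h L with hg
  have hginv : ∀ w ∈ h '' L, g w ∈ L ∧ h (g w) = w := by
    rintro w ⟨a, ha, rfl⟩
    exact ⟨Function.invFunOn_mem ⟨a, ha, rfl⟩, Function.invFunOn_eq ⟨a, ha, rfl⟩⟩
  have hgL : L ⊆ g '' (h '' L) := by
    intro y hy
    have hmem : h y ∈ h '' L := ⟨y, hy, rfl⟩
    obtain ⟨hgy, hghy⟩ := hginv _ hmem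
    have : s * ‖y - g (h y)‖ ≤ t * ‖h y - h (g (h y))‖ := hanti y hy _ hgy
    rw [hghy, sub_self, norm_zero, mul_zero] at this
    have : ‖y - g (h y)‖ = 0 := le_antisymm (nonpos_of_mul_nonpos_right ?_ hs) (norm_nonneg _)
    · have : y = g (h y) := by rwa [norm_sub_eq_zero_iff] at this
      exact ⟨h y, hmem, this.symm⟩
    · linarith [this]
  have hts : (0:ℝ) < t := hs.trans_le hst
  have hLip : LipschitzOnWith (Real.toNNReal (t / s)) g (h '' L) := by
    rw [lipschitzOnWith_iff_dist_le_mul]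
    intro w₁ hw₁ w₂ hw₂
    obtain ⟨hg₁, hh₁⟩ := hginv _ hw₁
    obtain ⟨hg₂, hh₂⟩ := hginv _ hw₂
    have hd := hanti _ hg₁ _ hg₂
    rw [hh₁, hh₂] at hd
    rw [dist_eq_norm, dist_eq_norm, Real.coe_toNNReal _ (by positivity)]
    rw [div_mul_eq_mul_div, le_div_iff₀ hs]
    calc ‖g w₁ - g w₂‖ * s = s * ‖g w₁ - g w₂‖ := mul_comm _ _
    _ ≤ t * ‖w₁ - w₂‖ := hd
  have hsc : ((Real.toNNReal (t / s) : ℝ≥0∞)) ^ ((n : ℕ) : ℝ) = ENNReal.ofReal ((t / s) ^ n) := by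
    rw [ENNReal.rpow_natCast]
    rw [show ((Real.toNNReal (t / s) : ℝ≥0∞)) = ENNReal.ofReal (t / s) from rfl]
    exact (ENNReal.ofReal_pow (by positivity) n).symm
  calc μH[(n : ℝ)] L ≤ μH[(n : ℝ)] (g '' (h '' L)) := measure_mono hgL
  _ ≤ (Real.toNNReal (t / s) : ℝ≥0∞) ^ (n : ℝ) * μH[(n : ℝ)] (h '' L) :=
      hLip.hausdorffMeasure_image_le (by positivity)
  _ ≤ ENNReal.ofReal ((t / s) ^ n) * μH[(n : ℝ)] (gam Ω s t) := by
      rw [← hsc]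
      exact mul_le_mul' le_rfl (measure_mono (Set.image_subset_iff.2 himg))

lemma level_packing {n : ℕ} {Ω : Set (EuclideanSpace ℝ (Fin (n + 1)))} (hΩopen : IsOpen Ω)
    (hvol : volume Ω < ⊤)
    (foot : EuclideanSpace ℝ (Fin (n + 1)) → EuclideanSpace ℝ (Fin (n + 1)))
    (hfm : ∀ y, foot y ∈ frontier Ω)
    (hfd : ∀ y, Metric.infDist y (frontier Ω) = dist y (foot y))
    {s δ : ℝ} (hδ : 0 < δ) (hδs : δ < s) :
    ∃ T : Finset (EuclideanSpace ℝ (Fin (n + 1))),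
      {y | y ∈ Ω ∧ Metric.infDist y (frontier Ω) = s} ⊆ ⋃ p ∈ T, ball p δ ∧
      (T.card : ℝ≥0∞) * volume (ball (0 : EuclideanSpace ℝ (Fin (n + 1))) (δ / 4)) ≤
        volume (Ω ∩ {y | s - δ ≤ Metric.infDist y (frontier Ω) ∧
          Metric.infDist y (frontier Ω) ≤ s}) := by
  classical
  have hs : 0 < s := hδ.trans hδs
  set L := {y | y ∈ Ω ∧ Metric.infDist y (frontier Ω) = s} with hLdef
  set slab := Ω ∩ {y | s - δ ≤ Metric.infDist y (frontier Ω) ∧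
      Metric.infDist y (frontier Ω) ≤ s} with hslab
  set q : EuclideanSpace ℝ (Fin (n + 1)) → EuclideanSpace ℝ (Fin (n + 1)) :=
    fun p => foot p + ((s - δ / 2) / s) • (p - foot p) with hqdef
  have hr0 : 0 < s - δ / 2 := by linarith
  have hrs : s - δ / 2 ≤ s := by linarith
  have hqp : ∀ p ∈ L, Metric.infDist (q p) (frontier Ω) = s - δ / 2 ∧ q p ∈ Ω ∧
      ‖q p - p‖ = δ / 2 := by
    rintro p ⟨hp, hps⟩
    have hfp : ‖foot p - p‖ = s := by rw [norm_sub_rev, ← dist_eq_norm, ← hfd p, hps]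
    obtain ⟨h1, h2, -, h4⟩ := interp_point hΩopen (hfm p) hp hps hfp hr0 hrs
    refine ⟨h1, h2, ?_⟩
    rw [norm_sub_rev]
    rw [h4]
    ring
  have hsep : ∀ p₁ ∈ L, ∀ p₂ ∈ L, δ ≤ dist p₁ p₂ → δ / 2 ≤ dist (q p₁) (q p₂) := by
    intro p₁ h₁ p₂ h₂ hd
    have hk := key_ineq (foot p₁) (foot p₂) p₁ p₂ hr0.le hrs ?_ ?_
    · rw [dist_eq_norm] at hd ⊢
      have h1 : (s - δ / 2) * δ ≤ (s - δ / 2) * ‖p₁ - p₂‖ := by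
        exact mul_le_mul_of_nonneg_left hd hr0.le
      have h2 : s * (δ / 2) ≤ (s - δ / 2) * δ := by nlinarith
      have : s * (δ / 2) ≤ s * ‖q p₁ - q p₂‖ := by
        refine le_trans (h2.trans (h1.trans hk)) ?_
        simp [hqdef]
      exact le_of_mul_le_mul_left this hs
    · rw [← dist_eq_norm, ← hfd p₁, ← dist_eq_norm]
      exact Metric.infDist_le_dist_of_mem (hfm p₂)
    · rw [← dist_eq_norm, ← hfd p₂, ← dist_eq_norm]
      exact Metric.infDist_le_dist_of_mem (hfm p₁)
  have hballs : ∀ p ∈ L, ball (q p) (δ / 4) ⊆ slab := by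
    intro p hp w hw
    obtain ⟨h1, h2, -⟩ := hqp p hp
    rw [mem_ball] at hw
    have hwq : Metric.infDist w (frontier Ω) ≤ s - δ / 4 := by
      have h' := Metric.infDist_le_infDist_add_dist (x := w) (y := q p) (s := frontier Ω)
      rw [h1] at h'
      have hcw : dist w (q p) = dist (q p) w := dist_comm _ _
      linarith
    have hwq' : s - 3 * δ / 4 ≤ Metric.infDist w (frontier Ω) := by
      have h' := Metric.infDist_le_infDist_add_dist (x := q p) (y := w) (s := frontier Ω)
      rw [h1] at h'
      have hcw : dist w (q p) = dist (q p) w := dist_comm _ _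
      linarith
    refine ⟨?_, by linarith, by linarith⟩
    refine seg_mem_of_infDist_pos hΩopen h2 (fun r hr => ?_)
    have hdr : dist (q p) r ≤ dist (q p) w := dist_le_of_mem_segment hr
    have := Metric.infDist_le_infDist_add_dist (x := q p) (y := r) (s := frontier Ω)
    rw [h1] at this
    rw [dist_comm] at hw
    linarith
  -- maximal δ-separated subset of L
  set S : Set (Set (EuclideanSpace ℝ (Fin (n + 1)))) :=
    {T | T ⊆ L ∧ T.Pairwise fun a b => δ ≤ dist a b} with hSdef
  obtain ⟨T, hTmax⟩ : ∃ T, Maximal (· ∈ S) T := by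
    refine zorn_subset S (fun c hcS hc => ⟨⋃₀ c, ⟨?_, ?_⟩, fun t ht => subset_sUnion_of_mem ht⟩)
    · exact sUnion_subset fun t ht => (hcS ht).1
    · intro a ha b hb hab
      obtain ⟨ta, hta, hat⟩ := ha
      obtain ⟨tb, htb, hbt⟩ := hb
      rcases hc.total hta htb with h | h
      · exact (hcS htb).2 (h hat) hbt hab
      · exact (hcS hta).2 hat (h hbt) hab
  have hTL : T ⊆ L := hTmax.1.1
  have hTpair : T.Pairwise fun a b => δ ≤ dist a b := hTmax.1.2
  have hcover : ∀ y ∈ L, ∃ p ∈ T, dist y p < δ := by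
    intro y hy
    by_contra hcon
    push_neg at hcon
    have hins : insert y T ∈ S := by
      refine ⟨insert_subset hy hTL, hTpair.insert (fun p hp _ => ⟨hcon p hp, ?_⟩)⟩
      rw [dist_comm]; exact hcon p hp
    have := hTmax.2 hins (subset_insert y T)
    have hyT : y ∈ T := this (mem_insert y T)
    have := hcon y hyT
    simp at this
    linarith
  -- every finite subset of T gives disjoint balls in slab
  have hkey : ∀ G : Finset (EuclideanSpace ℝ (Fin (n + 1))), ↑G ⊆ T →
      (G.card : ℝ≥0∞) * volume (ball (0 : EuclideanSpace ℝ (Fin (n + 1))) (δ / 4)) ≤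
        volume slab := by
    intro G hG
    have hdisj : (↑G : Set (EuclideanSpace ℝ (Fin (n + 1)))).PairwiseDisjoint
        (fun p => ball (q p) (δ / 4)) := by
      intro p₁ h₁ p₂ h₂ hne
      have hsep' := hsep p₁ (hTL (hG h₁)) p₂ (hTL (hG h₂)) (hTpair (hG h₁) (hG h₂) hne)
      exact ball_disjoint_ball (by linarith)
    have hbiu := measure_biUnion_finset (μ := volume) hdisj (fun p _ => measurableSet_ball)
    have hsub : (⋃ p ∈ G, ball (q p) (δ / 4)) ⊆ slab := by
      refine iUnion₂_subset fun p hp => hballs p (hTL (hG hp))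
    calc (G.card : ℝ≥0∞) * volume (ball (0 : EuclideanSpace ℝ (Fin (n + 1))) (δ / 4))
        = ∑ p ∈ G, volume (ball (q p) (δ / 4)) := by
          have hbeq : ∀ p : EuclideanSpace ℝ (Fin (n + 1)),
              volume (ball (q p) (δ / 4)) = volume (ball (0 : EuclideanSpace ℝ (Fin (n + 1))) (δ / 4)) :=
            fun p => by rw [EuclideanSpace.volume_ball, EuclideanSpace.volume_ball]
          simp_rw [hbeq]
          rw [Finset.sum_const, nsmul_eq_mul]
      _ = volume (⋃ p ∈ G, ball (q p) (δ / 4)) := hbiu.symm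
      _ ≤ volume slab := measure_mono hsub
  have hslabfin : volume slab ≠ ⊤ :=
    (lt_of_le_of_lt (measure_mono inter_subset_left) hvol).ne
  have hballpos : volume (ball (0 : EuclideanSpace ℝ (Fin (n + 1))) (δ / 4)) ≠ 0 :=
    (measure_ball_pos volume _ (by positivity)).ne'
  have hTfin : T.Finite := by
    by_contra hinf
    obtain ⟨k, hk⟩ := ENNReal.exists_nat_mul_gt hballpos hslabfin
    obtain ⟨G, hGT, hGcard⟩ := Set.Infinite.exists_subset_card_eq hinf k
    have := hkey G hGT
    rw [hGcard] at this
    exact absurd this (not_le.2 hk)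
  refine ⟨hTfin.toFinset, ?_, ?_⟩
  · intro y hy
    obtain ⟨p, hp, hdp⟩ := hcover y hy
    exact mem_biUnion (hTfin.mem_toFinset.2 hp) (mem_ball.2 hdp)
  · exact hkey hTfin.toFinset (by simp)

lemma level_finite {n : ℕ} {Ω : Set (EuclideanSpace ℝ (Fin (n + 1)))} (hΩopen : IsOpen Ω)
    (hvol : volume Ω < ⊤)
    (foot : EuclideanSpace ℝ (Fin (n + 1)) → EuclideanSpace ℝ (Fin (n + 1)))
    (hfm : ∀ y, foot y ∈ frontier Ω)
    (hfd : ∀ y, Metric.infDist y (frontier Ω) = dist y (foot y))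
    {s C : ℝ} (hs : 0 < s) (hC : 0 < C)
    (hslab : ∀ᶠ δ in nhdsWithin (0 : ℝ) (Set.Ioi 0),
      volume (Ω ∩ {y | s - δ ≤ Metric.infDist y (frontier Ω) ∧
        Metric.infDist y (frontier Ω) ≤ s}) ≤ ENNReal.ofReal (C * δ)) :
    μH[(n : ℝ)] {y | y ∈ Ω ∧ Metric.infDist y (frontier Ω) = s} ≠ ⊤ := by
  classical
  set κ := ENNReal.ofReal (Real.sqrt Real.pi ^ (n + 1) / Real.Gamma ((n + 1 : ℕ) / 2 + 1)) with hκ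
  have hκpos : 0 < κ := by
    rw [hκ]
    apply ENNReal.ofReal_pos.2
    apply div_pos (by positivity)
    exact Real.Gamma_pos_of_pos (by positivity)
  have hκtop : κ ≠ ⊤ := ENNReal.ofReal_ne_top
  -- the sequence of scales
  set seq : ℕ → ℝ := fun k => s / (2 * (k + 1)) with hseq
  have hseqpos : ∀ k, 0 < seq k := fun k => by positivity
  have hseqlt : ∀ k, seq k < s := by
    intro k
    rw [hseq]
    rw [div_lt_iff₀ (by positivity)]
    nlinarith [Nat.cast_nonneg (α := ℝ) k]
  have hseq0 : Filter.Tendsto seq Filter.atTop (nhdsWithin (0 : ℝ) (Set.Ioi 0)) := by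
    rw [tendsto_nhdsWithin_iff]
    constructor
    · have h1 : Filter.Tendsto (fun k : ℕ => s / 2 * (1 / ((k : ℝ) + 1))) Filter.atTop
          (nhds (s / 2 * 0)) := tendsto_one_div_add_atTop_nhds_zero_nat.const_mul (s / 2)
      rw [mul_zero] at h1
      convert h1 using 2 with k
      rw [hseq]
      field_simp
    · exact Filter.Eventually.of_forall (fun k => hseqpos k)
  -- choose coverings
  have hpack : ∀ k, ∃ T : Finset (EuclideanSpace ℝ (Fin (n + 1))),
      {y | y ∈ Ω ∧ Metric.infDist y (frontier Ω) = s} ⊆ ⋃ p ∈ T, ball p (seq k) ∧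
      (T.card : ℝ≥0∞) * volume (ball (0 : EuclideanSpace ℝ (Fin (n + 1))) (seq k / 4)) ≤
        volume (Ω ∩ {y | s - seq k ≤ Metric.infDist y (frontier Ω) ∧
          Metric.infDist y (frontier Ω) ≤ s}) :=
    fun k => level_packing hΩopen hvol foot hfm hfd (hseqpos k) (hseqlt k)
  choose T hTcov hTbound using hpack
  set M := ENNReal.ofReal (C * 2 ^ n * 4 ^ (n + 1)) / κ with hM
  have hMtop : M ≠ ⊤ := by
    rw [hM]
    exact (ENNReal.div_lt_top ENNReal.ofReal_ne_top hκpos.ne').ne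
  have hmain : μH[(n : ℝ)] {y | y ∈ Ω ∧ Metric.infDist y (frontier Ω) = s} ≤ M := by
    have hle := MeasureTheory.Measure.hausdorffMeasure_le_liminf_sum (n : ℝ)
      {y | y ∈ Ω ∧ Metric.infDist y (frontier Ω) = s}
      (fun k => ENNReal.ofReal (2 * seq k))
      (by
        rw [show (0 : ℝ≥0∞) = ENNReal.ofReal (2 * 0) by simp]
        exact (ENNReal.continuous_ofReal.tendsto _).comp
          ((hseq0.mono_right nhdsWithin_le_nhds).const_mul 2))
      (fun k (i : {x // x ∈ T k}) => ball (i : EuclideanSpace ℝ (Fin (n + 1))) (seq k))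
      (Filter.Eventually.of_forall (fun k i => by
        show EMetric.diam (ball (i : EuclideanSpace ℝ (Fin (n + 1))) (seq k))
          ≤ ENNReal.ofReal (2 * seq k)
        rw [← Metric.emetric_ball]
        exact (EMetric.diam_ball).trans (by
          rw [ENNReal.ofReal_mul (by norm_num)]
          simp)))
      (Filter.Eventually.of_forall (fun k => by
        refine (hTcov k).trans ?_
        intro y hy
        obtain ⟨p, hp, hyp⟩ := Set.mem_iUnion₂.1 hy
        exact Set.mem_iUnion.2 ⟨⟨p, hp⟩, hyp⟩))
    refine hle.trans ?_
    have hbound : ∀ᶠ k in Filter.atTop,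
        (∑ i : {x // x ∈ T k}, EMetric.diam
          (ball (i : EuclideanSpace ℝ (Fin (n + 1))) (seq k)) ^ (n : ℝ)) ≤ M := by
      filter_upwards [hseq0.eventually hslab] with k hk
      set δ := seq k with hδdef
      have hδ : 0 < δ := hseqpos k
      have hterm : ∀ i : {x // x ∈ T k}, EMetric.diam
          (ball (i : EuclideanSpace ℝ (Fin (n + 1))) δ) ^ (n : ℝ)
          ≤ ENNReal.ofReal (2 * δ) ^ n := by
        intro i
        rw [← ENNReal.rpow_natCast _ n]
        refine ENNReal.rpow_le_rpow ?_ (by positivity)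
        rw [← Metric.emetric_ball]
        refine (EMetric.diam_ball).trans ?_
        rw [ENNReal.ofReal_mul (by norm_num)]
        simp
      have hsum : (∑ i : {x // x ∈ T k}, EMetric.diam
          (ball (i : EuclideanSpace ℝ (Fin (n + 1))) δ) ^ (n : ℝ))
          ≤ ((T k).card : ℝ≥0∞) * ENNReal.ofReal (2 * δ) ^ n := by
        calc (∑ i : {x // x ∈ T k}, EMetric.diam
            (ball (i : EuclideanSpace ℝ (Fin (n + 1))) δ) ^ (n : ℝ))
            ≤ ∑ _i : {x // x ∈ T k}, ENNReal.ofReal (2 * δ) ^ n :=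
              Finset.sum_le_sum (fun i _ => hterm i)
          _ = ((T k).card : ℝ≥0∞) * ENNReal.ofReal (2 * δ) ^ n := by
              rw [Finset.sum_const, nsmul_eq_mul]
              congr 1
              rw [Finset.card_univ, Fintype.card_coe]
    -- now the cardinality bound
      refine hsum.trans ?_
      have hvb : volume (ball (0 : EuclideanSpace ℝ (Fin (n + 1))) (δ / 4))
          = ENNReal.ofReal ((δ / 4) ^ (n + 1)) * κ := by
        rw [EuclideanSpace.volume_ball, Fintype.card_fin, hκ,
          ← ENNReal.ofReal_pow (by positivity)]
      have hcard : ((T k).card : ℝ≥0∞) ≤ ENNReal.ofReal (C * δ) /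
          (ENNReal.ofReal ((δ / 4) ^ (n + 1)) * κ) := by
        rw [ENNReal.le_div_iff_mul_le
          (Or.inl (mul_ne_zero (ENNReal.ofReal_pos.2 (by positivity)).ne' hκpos.ne'))
          (Or.inl (ENNReal.mul_ne_top ENNReal.ofReal_ne_top hκtop))]
        rw [← hvb]
        exact (hTbound k).trans hk
      calc ((T k).card : ℝ≥0∞) * ENNReal.ofReal (2 * δ) ^ n
          ≤ (ENNReal.ofReal (C * δ) / (ENNReal.ofReal ((δ / 4) ^ (n + 1)) * κ))
            * ENNReal.ofReal (2 * δ) ^ n := by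
            exact mul_le_mul_left hcard _
        _ = M := by
            have hnum : ENNReal.ofReal (C * δ) * ENNReal.ofReal (2 * δ) ^ n
                = ENNReal.ofReal ((δ / 4) ^ (n + 1)) * ENNReal.ofReal (C * 2 ^ n * 4 ^ (n + 1)) := by
              rw [← ENNReal.ofReal_pow (by positivity), ← ENNReal.ofReal_mul (by positivity),
                ← ENNReal.ofReal_mul (by positivity)]
              congr 1
              field_simp
              have h4 : ((1:ℝ) / 4) ^ n * 4 ^ n = 1 := by rw [← mul_pow]; norm_num
              linear_combination (-(δ * δ ^ n * 2 ^ n)) * h4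
            rw [div_eq_mul_inv, mul_right_comm, ← div_eq_mul_inv, hnum,
              ENNReal.mul_div_mul_left _ _ (ENNReal.ofReal_pos.2 (by positivity)).ne'
                ENNReal.ofReal_ne_top, hM]
    calc Filter.liminf (fun k => ∑ i : {x // x ∈ T k}, EMetric.diam
          (ball (i : EuclideanSpace ℝ (Fin (n + 1))) (seq k)) ^ (n : ℝ)) Filter.atTop
        ≤ Filter.liminf (fun _ => M) Filter.atTop := Filter.liminf_le_liminf hbound
      _ = M := Filter.liminf_const M
  exact (lt_of_le_of_lt hmain hMtop.lt_top).ne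

set_option maxHeartbeats 1000000 in
/-- Claim (3.28): for a.e. `s > 0`, `ℋⁿ(∂Ω_s \ Γ_s^+) = 0`, i.e.
`ℋⁿ(Γ_s^+) = ℋⁿ(∂Ω_s)`. -/
theorem stmt_14 (n : ℕ) (hn : 1 ≤ n)
    (Ω : Set (EuclideanSpace ℝ (Fin (n + 1))))
    (hΩopen : IsOpen Ω) (hΩne : Ω.Nonempty) (hfr : (frontier Ω).Nonempty)
    (hvol : volume Ω < ⊤)
    (u : EuclideanSpace ℝ (Fin (n + 1)) → ℝ)
    (hu : ∀ y, u y = Metric.infDist y (frontier Ω)) :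
    ∀ᵐ s ∂(volume.restrict (Set.Ioi (0 : ℝ))),
      μH[(n : ℝ)] ({y | y ∈ Ω ∧ u y = s} \
        {y | ∃ t, s < t ∧ ∃ x z, x ∈ frontier Ω ∧ z ∈ Ω ∧ u z = t ∧ ‖x - z‖ = t ∧
          y = x + (s / t) • (z - x)}) = 0 := by
  classical
  choose foot hfm hfd using fun y => isClosed_frontier.exists_infDist_eq_dist hfr y
  set m : ℝ → ℝ≥0∞ :=
    fun σ => μH[(n : ℝ)] {y | y ∈ Ω ∧ Metric.infDist y (frontier Ω) = σ} with hm
  set φ : ℝ → ℝ≥0∞ :=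
    fun σ => if 0 < σ then m σ * ENNReal.ofReal (σ⁻¹ ^ n) else ⊤ with hφ
  -- φ is antitone
  have hφanti : Antitone φ := by
    intro σ₁ σ₂ h
    by_cases h₁ : 0 < σ₁
    · have h₂ : 0 < σ₂ := h₁.trans_le h
      rcases eq_or_lt_of_le h with rfl | hlt
      · exact le_rfl
      simp only [hφ, if_pos h₁, if_pos h₂]
      have hml : m σ₂ ≤ ENNReal.ofReal ((σ₂ / σ₁) ^ n) *
          μH[(n : ℝ)] (gam Ω σ₁ σ₂) := level_le_gam foot hfm hfd h₁ hlt.le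
      have hgl : μH[(n : ℝ)] (gam Ω σ₁ σ₂) ≤ m σ₁ :=
        measure_mono (gam_subset_level hΩopen h₁ hlt.le)
      calc m σ₂ * ENNReal.ofReal (σ₂⁻¹ ^ n)
          ≤ (ENNReal.ofReal ((σ₂ / σ₁) ^ n) * m σ₁) * ENNReal.ofReal (σ₂⁻¹ ^ n) :=
            mul_le_mul_left (hml.trans (mul_le_mul_right hgl _)) _
        _ = m σ₁ * (ENNReal.ofReal ((σ₂ / σ₁) ^ n) * ENNReal.ofReal (σ₂⁻¹ ^ n)) := by ring
        _ = m σ₁ * ENNReal.ofReal (σ₁⁻¹ ^ n) := by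
            rw [← ENNReal.ofReal_mul (by positivity), ← mul_pow]
            congr 3
            field_simp
    · simp only [hφ, if_neg h₁]
      exact le_top
  -- the monotone volume profile
  set ψ : ℝ → ℝ :=
    fun σ => (volume (Ω ∩ {y | Metric.infDist y (frontier Ω) ≤ σ})).toReal with hψ
  have hψmono : Monotone ψ := by
    intro a b hab
    refine ENNReal.toReal_mono ((measure_mono inter_subset_left).trans_lt hvol).ne ?_
    exact measure_mono (inter_subset_inter_right _ (fun y hy => le_trans hy hab))
  have hmeas : ∀ r : ℝ, MeasurableSet (Ω ∩ {y | Metric.infDist y (frontier Ω) ≤ r}) := by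
    intro r
    exact hΩopen.measurableSet.inter
      ((Metric.continuous_infDist_pt (frontier Ω)).measurable measurableSet_Iic)
  have hae1 : ∀ᵐ s ∂(volume : Measure ℝ), DifferentiableAt ℝ ψ s := hψmono.ae_differentiableAt
  have hae2 : ∀ᵐ s ∂(volume : Measure ℝ), ContinuousAt φ s :=
    ae_iff.2 ((hφanti.countable_not_continuousAt).measure_zero _)
  filter_upwards [ae_restrict_of_ae hae1, ae_restrict_of_ae hae2,
    ae_restrict_mem measurableSet_Ioi] with s h1 h2 hs
  rw [Set.mem_Ioi] at hs
  simp only [hu]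
  -- the good level set and the reachable set
  set Gp := {y : EuclideanSpace ℝ (Fin (n + 1)) | ∃ t, s < t ∧ ∃ x z, x ∈ frontier Ω ∧
    z ∈ Ω ∧ Metric.infDist z (frontier Ω) = t ∧ ‖x - z‖ = t ∧
    y = x + (s / t) • (z - x)} with hGp
  -- step 1 : finiteness of m s
  have hfin : m s ≠ ⊤ := by
    set d := deriv ψ s with hd
    set C := 2 * (|d| + 1) with hC
    refine level_finite hΩopen hvol foot hfm hfd (C := C) hs (by rw [hC]; positivity) ?_
    have hslope : Filter.Tendsto (slope ψ s) (nhdsWithin s {s}ᶜ) (nhds d) :=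
      hasDerivAt_iff_tendsto_slope.1 h1.hasDerivAt
    have hslope' : Filter.Tendsto (slope ψ s) (nhdsWithin s (Iio s)) (nhds d) :=
      hslope.mono_left (nhdsWithin_mono s (fun x hx => ne_of_lt hx))
    have hlt : ∀ᶠ x in nhdsWithin s (Iio s), slope ψ s x < |d| + 1 :=
      hslope'.eventually_lt_const (lt_of_le_of_lt (le_abs_self d) (lt_add_one _))
    have hmap : Filter.Tendsto (fun δ : ℝ => s - 2 * δ) (nhdsWithin (0:ℝ) (Set.Ioi 0))
        (nhdsWithin s (Iio s)) := by
      rw [tendsto_nhdsWithin_iff]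
      constructor
      · have : Filter.Tendsto (fun δ : ℝ => s - 2 * δ) (nhds 0) (nhds (s - 2 * 0)) :=
          tendsto_const_nhds.sub ((continuous_const.mul continuous_id).tendsto 0)
        rw [mul_zero, sub_zero] at this
        exact this.mono_left nhdsWithin_le_nhds
      · filter_upwards [self_mem_nhdsWithin] with δ hδ
        rw [Set.mem_Ioi] at hδ
        rw [Set.mem_Iio]
        linarith
    filter_upwards [hmap.eventually hlt, self_mem_nhdsWithin] with δ hδslope hδpos
    rw [Set.mem_Ioi] at hδpos
    have hψsub : ψ s - ψ (s - 2 * δ) < C * δ := by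
      have heq : slope ψ s (s - 2 * δ) = (ψ s - ψ (s - 2 * δ)) / (2 * δ) := by
        rw [slope_def_field, show s - 2 * δ - s = -(2 * δ) by ring]
        rw [div_neg, ← neg_div, neg_sub]
      rw [heq, div_lt_iff₀ (by positivity)] at hδslope
      rw [hC]
      linarith
    have hsub : Ω ∩ {y | s - δ ≤ Metric.infDist y (frontier Ω) ∧
        Metric.infDist y (frontier Ω) ≤ s}
        ⊆ (Ω ∩ {y | Metric.infDist y (frontier Ω) ≤ s}) \
          (Ω ∩ {y | Metric.infDist y (frontier Ω) ≤ s - 2 * δ}) := by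
      rintro y ⟨hy, hy1, hy2⟩
      exact ⟨⟨hy, hy2⟩, fun hc => by
        have := hc.2
        simp only [Set.mem_setOf_eq] at this
        linarith⟩
    refine (measure_mono hsub).trans ?_
    have hBA : (Ω ∩ {y | Metric.infDist y (frontier Ω) ≤ s - 2 * δ})
        ⊆ (Ω ∩ {y | Metric.infDist y (frontier Ω) ≤ s}) := by
      refine inter_subset_inter_right _ (fun y hy => ?_)
      simp only [Set.mem_setOf_eq] at hy ⊢
      linarith
    rw [measure_diff hBA ((hmeas (s - 2 * δ)).nullMeasurableSet)
      (((measure_mono inter_subset_left).trans_lt hvol).ne)]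
    have hA : volume (Ω ∩ {y | Metric.infDist y (frontier Ω) ≤ s}) = ENNReal.ofReal (ψ s) :=
      (ENNReal.ofReal_toReal ((measure_mono inter_subset_left).trans_lt hvol).ne).symm
    have hB : volume (Ω ∩ {y | Metric.infDist y (frontier Ω) ≤ s - 2 * δ})
        = ENNReal.ofReal (ψ (s - 2 * δ)) :=
      (ENNReal.ofReal_toReal ((measure_mono inter_subset_left).trans_lt hvol).ne).symm
    rw [hA, hB, ← ENNReal.ofReal_sub _ ENNReal.toReal_nonneg]
    exact ENNReal.ofReal_le_ofReal hψsub.le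
  -- step 2 : the approximating levels from above
  set tk : ℕ → ℝ := fun k => s + 1 / (k + 1) with htkdef
  have htk : ∀ k : ℕ, s < tk k := fun k => lt_add_of_pos_right _ (by positivity)
  have htkpos : ∀ k : ℕ, 0 < tk k := fun k => hs.trans (htk k)
  have htktend : Filter.Tendsto tk Filter.atTop (nhds s) := by
    have h' := tendsto_one_div_add_atTop_nhds_zero_nat.const_add s
    rw [add_zero] at h'
    exact h'
  have hφtk : Filter.Tendsto (fun k => φ (tk k)) Filter.atTop (nhds (φ s)) :=
    (h2.tendsto).comp htktend
  set ck : ℕ → ℝ≥0∞ := fun k => ENNReal.ofReal (s ^ n) * φ (tk k) with hckdef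
  have hcktend : Filter.Tendsto ck Filter.atTop (nhds (ENNReal.ofReal (s ^ n) * φ s)) :=
    ENNReal.Tendsto.const_mul hφtk (Or.inr ENNReal.ofReal_ne_top)
  have hφsval : ENNReal.ofReal (s ^ n) * φ s = m s := by
    rw [hφ]
    simp only [if_pos hs]
    rw [mul_comm (m s) _, ← mul_assoc, ← ENNReal.ofReal_mul (by positivity), ← mul_pow,
      mul_inv_cancel₀ hs.ne', one_pow, ENNReal.ofReal_one, one_mul]
  rw [hφsval] at hcktend
  have hbound : ∀ k : ℕ, μH[(n : ℝ)] ({y | y ∈ Ω ∧ Metric.infDist y (frontier Ω) = s} \ Gp)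
      ≤ m s - ck k := by
    intro k
    have hsk : s ≤ tk k := (htk k).le
    have hgamL : gam Ω s (tk k) ⊆ {y | y ∈ Ω ∧ Metric.infDist y (frontier Ω) = s} :=
      gam_subset_level hΩopen hs hsk
    have hgamGp : gam Ω s (tk k) ⊆ Gp := by
      rintro y ⟨x, z, hx, hz, hzt, hxz, rfl⟩
      exact ⟨tk k, htk k, x, z, hx, hz, hzt, hxz, rfl⟩
    have hgamfin : μH[(n : ℝ)] (gam Ω s (tk k)) ≠ ⊤ :=
      ((measure_mono hgamL).trans_lt hfin.lt_top).ne
    have hdiff : μH[(n : ℝ)] ({y | y ∈ Ω ∧ Metric.infDist y (frontier Ω) = s} \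
        gam Ω s (tk k)) = m s - μH[(n : ℝ)] (gam Ω s (tk k)) :=
      measure_diff hgamL (gam_measurableSet hΩopen (htkpos k)).nullMeasurableSet hgamfin
    have hckle : ck k ≤ μH[(n : ℝ)] (gam Ω s (tk k)) := by
      have hml := level_le_gam foot hfm hfd hs hsk
      have hckeq : ck k = ENNReal.ofReal ((s / tk k) ^ n) * m (tk k) := by
        rw [hckdef]
        simp only [hφ, if_pos (htkpos k)]
        rw [mul_comm (m (tk k)) _, ← mul_assoc, ← ENNReal.ofReal_mul (by positivity), ← mul_pow,
          ← div_eq_mul_inv]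
      rw [hckeq]
      calc ENNReal.ofReal ((s / tk k) ^ n) * m (tk k)
          ≤ ENNReal.ofReal ((s / tk k) ^ n) * (ENNReal.ofReal ((tk k / s) ^ n) *
            μH[(n : ℝ)] (gam Ω s (tk k))) := mul_le_mul_right hml _
        _ = (ENNReal.ofReal ((s / tk k) ^ n) * ENNReal.ofReal ((tk k / s) ^ n)) *
            μH[(n : ℝ)] (gam Ω s (tk k)) := (mul_assoc _ _ _).symm
        _ = μH[(n : ℝ)] (gam Ω s (tk k)) := by
            rw [← ENNReal.ofReal_mul (by positivity), ← mul_pow,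
              show s / tk k * (tk k / s) = 1 by
                have := (htkpos k).ne'; field_simp, one_pow, ENNReal.ofReal_one, one_mul]
    calc μH[(n : ℝ)] ({y | y ∈ Ω ∧ Metric.infDist y (frontier Ω) = s} \ Gp)
        ≤ μH[(n : ℝ)] ({y | y ∈ Ω ∧ Metric.infDist y (frontier Ω) = s} \ gam Ω s (tk k)) :=
          measure_mono (Set.diff_subset_diff_right hgamGp)
      _ = m s - μH[(n : ℝ)] (gam Ω s (tk k)) := hdiff
      _ ≤ m s - ck k := tsub_le_tsub_left hckle _
  have hlim : Filter.Tendsto (fun k => m s - ck k) Filter.atTop (nhds 0) := by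
    have hsub := ENNReal.Tendsto.sub (tendsto_const_nhds (x := m s) (f := Filter.atTop))
      hcktend (Or.inl hfin)
    simpa using hsub
  exact le_antisymm (ge_of_tendsto' hlim hbound) zero_le
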